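/- Let ⟨T, Σ, C₁ ⊑ C₂⟩ with Σ = N_C be an EL TBox abduction problem with T in normal form and ⊤-free, Φ its first-order translation, and A = {A₁(t₁),…,A_n(t_n)} ⊆ PI^{g+}_{N_C}(Φ) a nonempty set of ground atoms over unary predicates (n > 0). Then there exist an EL description tree 𝔗 = (V,E,v₀,l) and a Skolem labeling sl of 𝔗 such that A = I^c_A(sl) and T ⊨ C₁ ⊑ C_𝔗. -/

import Mathlib

namespace ELAbd

/-! ### EL concepts, TBoxes, semantics -/

inductive ELConcept : Type where
  | top : ELConcept
  | atom : ℕ → ELConcept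
  | conj : ELConcept → ELConcept → ELConcept
  | ex : ℕ → ELConcept → ELConcept
deriving DecidableEq

abbrev CI := ELConcept × ELConcept
abbrev TBox := Finset CI

structure Interp (α : Type) where
  conc : ℕ → Set α
  role : ℕ → Set (α × α)

def ELConcept.sem {α : Type} (I : Interp α) : ELConcept → Set α
  | .top => Set.univ
  | .atom A => I.conc A
  | .conj C D => C.sem I ∩ D.sem I
  | .ex r C => {d | ∃ e, (d, e) ∈ I.role r ∧ e ∈ C.sem I}

def Models {α : Type} (I : Interp α) (T : TBox) : Prop :=
  ∀ ci ∈ T, ci.1.sem I ⊆ ci.2.sem I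

def Entails (T : TBox) (C D : ELConcept) : Prop :=
  ∀ (α : Type) (I : Interp α), Models I T → C.sem I ⊆ D.sem I

def EntailsCI (T : TBox) (ci : CI) : Prop := Entails T ci.1 ci.2

def TEntails (T T' : TBox) : Prop :=
  ∀ (α : Type) (I : Interp α), Models I T → Models I T'

def TEquiv (T T' : TBox) : Prop := TEntails T T' ∧ TEntails T' T

/-- Equality of concepts modulo the convention that conjunctions are read as
sets (associativity, commutativity, idempotence, `⊤` as empty conjunction). -/
inductive CEq : ELConcept → ELConcept → Prop
  | refl (C) : CEq C C
  | symm {C D} : CEq C D → CEq D C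
  | trans {C D E} : CEq C D → CEq D E → CEq C E
  | congr_conj {C C' D D'} : CEq C C' → CEq D D' → CEq (.conj C D) (.conj C' D')
  | congr_ex {r C C'} : CEq C C' → CEq (.ex r C) (.ex r C')
  | comm (C D) : CEq (.conj C D) (.conj D C)
  | assoc (C D E) : CEq (.conj (.conj C D) E) (.conj C (.conj D E))
  | idem (C) : CEq (.conj C C) C
  | top_unit (C) : CEq (.conj .top C) C

/-- The relation `≼⊓` on concepts. -/
inductive PrecSq : ELConcept → ELConcept → Prop
  | refl (C) : PrecSq C C
  | conjL {C D'} (D'') : PrecSq C D' → PrecSq C (.conj D' D'')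
  | ex (r) {C' D'} : PrecSq C' D' → PrecSq (.ex r C') (.ex r D')

def ELConcept.concNames : ELConcept → Set ℕ
  | .top => ∅
  | .atom A => {A}
  | .conj C D => C.concNames ∪ D.concNames
  | .ex _ C => C.concNames

def ELConcept.roleNames : ELConcept → Set ℕ
  | .top => ∅
  | .atom _ => ∅
  | .conj C D => C.roleNames ∪ D.roleNames
  | .ex r C => {r} ∪ C.roleNames

def ELConcept.size : ELConcept → ℕ
  | .top => 1
  | .atom _ => 1
  | .conj C D => C.size + D.size + 1
  | .ex _ C => C.size + 1

def ELConcept.exCount : ELConcept → ℕ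
  | .top => 0
  | .atom _ => 0
  | .conj C D => C.exCount + D.exCount
  | .ex _ C => C.exCount + 1

def tboxSize (T : TBox) : ℕ := T.sum (fun ci => ci.1.size + ci.2.size)

def tboxConcNames (T : TBox) : Set ℕ :=
  {A | ∃ ci ∈ T, A ∈ ci.1.concNames ∪ ci.2.concNames}

def tboxRoleNames (T : TBox) : Set ℕ :=
  {r | ∃ ci ∈ T, r ∈ ci.1.roleNames ∪ ci.2.roleNames}

/-- Normal form (simultaneously `⊤`-free): every CI has one of the four shapes
`A ⊑ B`, `A₁ ⊓ A₂ ⊑ B`, `∃r.A ⊑ B`, `A ⊑ ∃r.B` with atomic concepts. -/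
def NFci (ci : CI) : Prop :=
  (∃ A B, ci = (ELConcept.atom A, ELConcept.atom B)) ∨
  (∃ A₁ A₂ B, ci = (ELConcept.conj (.atom A₁) (.atom A₂), ELConcept.atom B)) ∨
  (∃ r A B, ci = (ELConcept.ex r (.atom A), ELConcept.atom B)) ∨
  (∃ A r B, ci = (ELConcept.atom A, ELConcept.ex r (.atom B)))

def NormalForm (T : TBox) : Prop := ∀ ci ∈ T, NFci ci

/-- Normal form where the components may also be `⊤`. -/
def AtomTop (C : ELConcept) : Prop := C = .top ∨ ∃ A, C = ELConcept.atom A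

def NFciTop (ci : CI) : Prop :=
  (AtomTop ci.1 ∧ AtomTop ci.2) ∨
  (∃ A₁ A₂, ci.1 = ELConcept.conj A₁ A₂ ∧ AtomTop A₁ ∧ AtomTop A₂ ∧ AtomTop ci.2) ∨
  (∃ r A, ci.1 = ELConcept.ex r A ∧ AtomTop A ∧ AtomTop ci.2) ∨
  (∃ r B, ci.2 = ELConcept.ex r B ∧ AtomTop B ∧ AtomTop ci.1)

def NormalFormTop (T : TBox) : Prop := ∀ ci ∈ T, NFciTop ci

/-! ### EL description trees -/

noncomputable def conjOf (s : Finset ℕ) : ELConcept :=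
  (s.toList.map ELConcept.atom).foldr ELConcept.conj ELConcept.top

structure DescTree where
  V : Finset ℕ
  root : ℕ
  E : Finset (ℕ × ℕ × ℕ)      -- (v, r, w) : edge from v to w labeled r
  label : ℕ → Finset ℕ
  dep : ℕ → ℕ
  root_mem : root ∈ V
  edge_mem : ∀ e ∈ E, e.1 ∈ V ∧ e.2.2 ∈ V
  parent_unique : ∀ e ∈ E, ∀ e' ∈ E, e.2.2 = e'.2.2 → e = e'
  parent_exists : ∀ v ∈ V, v ≠ root → ∃ e ∈ E, e.2.2 = v
  dep_root : dep root = 0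
  dep_edge : ∀ e ∈ E, dep e.2.2 = dep e.1 + 1

noncomputable def DescTree.conceptAt (t : DescTree) : ℕ → ℕ → ELConcept
  | 0, v => conjOf (t.label v)
  | n + 1, v =>
      ((t.label v).toList.map ELConcept.atom ++
        (t.E.filter (fun e => e.1 = v)).toList.map
          (fun e => ELConcept.ex e.2.1 (t.conceptAt n e.2.2))).foldr ELConcept.conj ELConcept.top

/-- The concept `C_𝔗` represented by a description tree. -/
noncomputable def DescTree.concept (t : DescTree) : ELConcept := t.conceptAt t.V.card t.root

/-- `t` is a description tree for the concept `D` (concept equality is taken modulo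
the conjunctions-as-sets convention). -/
def Represents (t : DescTree) (D : ELConcept) : Prop := CEq t.concept D

/-- Weak homomorphism from `src` to `tgt`. -/
def WeakHom (src tgt : DescTree) (φ : ℕ → ℕ) : Prop :=
  φ src.root = tgt.root ∧ ∀ e ∈ src.E, (φ e.1, e.2.1, φ e.2.2) ∈ tgt.E

/-- `T`-homomorphism from `src` to `tgt`. -/
def THom (T : TBox) (src tgt : DescTree) (φ : ℕ → ℕ) : Prop :=
  WeakHom src tgt φ ∧
  ∀ w ∈ src.V, Entails T (conjOf (tgt.label (φ w))) (conjOf (src.label w))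

/-! ### Abduction problems, hypotheses, connection minimality -/

inductive AtomConj (S : Set ℕ) : ELConcept → Prop
  | atom {A} : A ∈ S → AtomConj S (.atom A)
  | conj {C D} : AtomConj S C → AtomConj S D → AtomConj S (.conj C D)

def IsHypothesis (T : TBox) (S : Set ℕ) (C1 C2 : ℕ) (H : TBox) : Prop :=
  (∀ ci ∈ H, (AtomConj S ci.1 ∨ ci.1 = ELConcept.top) ∧ AtomConj S ci.2) ∧
  Entails (T ∪ H) (.atom C1) (.atom C2) ∧
  ∀ ci ∈ H, ¬ EntailsCI T ci

def BuiltOver (S : Set ℕ) (C : ELConcept) : Prop := C.concNames ⊆ S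

/-- The TBox determined by condition (4) of the definition of connection minimality. -/
def hypSetOf (T : TBox) (t1 t2 : DescTree) (φ : ℕ → ℕ) : Set CI :=
  {ci | ∃ w ∈ t2.V, ci = (conjOf (t1.label (φ w)), conjOf (t2.label w)) ∧
        ¬ EntailsCI T ci}

/-- Conditions (1)–(4) of connection minimality, with explicit witnessing
description trees `t1`, `t2` for `D1`, `D2` and the weak homomorphism `φ`
from `𝔗_{D₂}` to `𝔗_{D₁}`. -/
def ConnMinimalWit (T : TBox) (S : Set ℕ) (C1 C2 : ℕ) (H : TBox)
    (D1 D2 : ELConcept) (t1 t2 : DescTree) (φ : ℕ → ℕ) : Prop :=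
  BuiltOver S D1 ∧ BuiltOver S D2 ∧
  Represents t1 D1 ∧ Represents t2 D2 ∧
  Entails T (.atom C1) D1 ∧
  Entails T D2 (.atom C2) ∧
  (∀ D2', Entails T D2' (.atom C2) → PrecSq D2' D2 → PrecSq D2 D2') ∧
  WeakHom t2 t1 φ ∧
  (↑H : Set CI) = hypSetOf T t1 t2 φ

def ConnMinimal (T : TBox) (S : Set ℕ) (C1 C2 : ℕ) (H : TBox) : Prop :=
  IsHypothesis T S C1 C2 H ∧
  ∃ D1 D2 t1 t2 φ, ConnMinimalWit T S C1 C2 H D1 D2 t1 t2 φ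

/-- Packedness of a witness: no alternative `D₁'`, `φ'` (for the same `D₂`, `t₂`)
strictly enlarges one of the left-hand side labels while keeping all others. -/
def PackedWit (T : TBox) (S : Set ℕ) (C1 : ℕ) (t1 t2 : DescTree) (φ : ℕ → ℕ) : Prop :=
  ¬ ∃ (D1' : ELConcept) (t1' : DescTree) (φ' : ℕ → ℕ) (w : ℕ),
      BuiltOver S D1' ∧ Represents t1' D1' ∧ Entails T (.atom C1) D1' ∧
      WeakHom t2 t1' φ' ∧ w ∈ t2.V ∧
      t1.label (φ w) ⊂ t1'.label (φ' w) ∧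
      ∀ w' ∈ t2.V, w' ≠ w → t1.label (φ w') = t1'.label (φ' w')

def PackedConnMinimal (T : TBox) (S : Set ℕ) (C1 C2 : ℕ) (H : TBox) : Prop :=
  IsHypothesis T S C1 C2 H ∧
  ∃ D1 D2 t1 t2 φ, ConnMinimalWit T S C1 C2 H D1 D2 t1 t2 φ ∧
    PackedWit T S C1 t1 t2 φ

/-! ### First-order logic: terms, clauses, semantics -/

/-- Skolem functions: one for each (copy, axiom) pair. -/
abbrev SkFun := Bool × CI

inductive Term : Type where
  | var : ℕ → Term
  | sk0 : Term
  | app : SkFun → Term → Term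
deriving DecidableEq

/-- Ground Skolem terms. -/
inductive GTerm : Type where
  | sk0 : GTerm
  | app : SkFun → GTerm → GTerm
deriving DecidableEq

def GTerm.toTerm : GTerm → Term
  | .sk0 => .sk0
  | .app f t => .app f t.toTerm

def GTerm.depth : GTerm → ℕ
  | .sk0 => 0
  | .app _ t => t.depth + 1

inductive GTerm.Subterm : GTerm → GTerm → Prop
  | refl (t) : GTerm.Subterm t t
  | app {s t} (f) : GTerm.Subterm s t → GTerm.Subterm s (.app f t)

/-- Atoms; unary predicates `(b, A)` where `b = false` marks the original copy of the
atomic concept `A` and `b = true` its duplicate `Ā`. -/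
inductive Atm : Type where
  | conc : (Bool × ℕ) → Term → Atm
  | role : ℕ → Term → Term → Atm
deriving DecidableEq

structure Lit : Type where
  pos : Bool
  atm : Atm
deriving DecidableEq

abbrev Clause := Finset Lit

inductive GAtm : Type where
  | conc : (Bool × ℕ) → GTerm → GAtm
  | role : ℕ → GTerm → GTerm → GAtm
deriving DecidableEq

def GAtm.toAtm : GAtm → Atm
  | .conc P t => .conc P t.toTerm
  | .role r t u => .role r t.toTerm u.toTerm

structure FOInterp (α : Type) where
  c0 : α
  app : SkFun → α → α
  conc : Bool × ℕ → Set α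
  role : ℕ → Set (α × α)

def Term.eval {α : Type} (I : FOInterp α) (ρ : ℕ → α) : Term → α
  | .var x => ρ x
  | .sk0 => I.c0
  | .app f t => I.app f (t.eval I ρ)

def Atm.sat {α : Type} (I : FOInterp α) (ρ : ℕ → α) : Atm → Prop
  | .conc P t => t.eval I ρ ∈ I.conc P
  | .role r t u => (t.eval I ρ, u.eval I ρ) ∈ I.role r

def Lit.sat {α : Type} (I : FOInterp α) (ρ : ℕ → α) (l : Lit) : Prop :=
  if l.pos then l.atm.sat I ρ else ¬ l.atm.sat I ρ

/-- Satisfaction of a clause: the universal closure of the disjunction holds. -/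
def ClauseSat {α : Type} (I : FOInterp α) (c : Clause) : Prop :=
  ∀ ρ : ℕ → α, ∃ l ∈ c, l.sat I ρ

def CModels {α : Type} (I : FOInterp α) (Ψ : Set Clause) : Prop :=
  ∀ c ∈ Ψ, ClauseSat I c

def CEntails (Ψ : Set Clause) (c : Clause) : Prop :=
  ∀ (α : Type) (I : FOInterp α), CModels I Ψ → ClauseSat I c

def ClEntails (c d : Clause) : Prop := CEntails {c} d

def IsPrimeImplicate (Ψ : Set Clause) (c : Clause) : Prop :=
  CEntails Ψ c ∧ ∀ c' : Clause, CEntails Ψ c' → ClEntails c' c → ClEntails c c'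

def Term.vars : Term → Set ℕ
  | .var x => {x}
  | .sk0 => ∅
  | .app _ t => t.vars

def Atm.vars : Atm → Set ℕ
  | .conc _ t => t.vars
  | .role _ t u => t.vars ∪ u.vars

def ClauseVars (c : Clause) : Set ℕ := {x | ∃ l ∈ c, x ∈ l.atm.vars}

def ClauseGround (c : Clause) : Prop := ClauseVars c = ∅
def ClausePositive (c : Clause) : Prop := ∀ l ∈ c, l.pos = true
def ClauseNegative (c : Clause) : Prop := ∀ l ∈ c, l.pos = false

def Atm.inSig (S : Set ℕ) : Atm → Prop
  | .conc P _ => P.2 ∈ S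
  | .role _ _ _ => True

def ClauseInSig (S : Set ℕ) (c : Clause) : Prop := ∀ l ∈ c, l.atm.inSig S

/-- Positive ground prime implicates over `Σ ∪ N_R`. -/
def PIpos (S : Set ℕ) (Ψ : Set Clause) : Set Clause :=
  {c | IsPrimeImplicate Ψ c ∧ ClauseGround c ∧ ClausePositive c ∧ ClauseInSig S c}

/-- Negative ground prime implicates over `Σ ∪ N_R`. -/
def PIneg (S : Set ℕ) (Ψ : Set Clause) : Set Clause :=
  {c | IsPrimeImplicate Ψ c ∧ ClauseGround c ∧ ClauseNegative c ∧ ClauseInSig S c}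

/-- The ground atom `a` belongs (as a unit clause) to `PI^{g+}_Σ(Ψ)`. -/
def InPIpos (S : Set ℕ) (Ψ : Set Clause) (a : GAtm) : Prop :=
  ({⟨true, a.toAtm⟩} : Clause) ∈ PIpos S Ψ

/-! ### Substitutions and resolution -/

def Term.subst (σ : ℕ → Term) : Term → Term
  | .var x => σ x
  | .sk0 => .sk0
  | .app f t => .app f (t.subst σ)

def Atm.subst (σ : ℕ → Term) : Atm → Atm
  | .conc P t => .conc P (t.subst σ)
  | .role r t u => .role r (t.subst σ) (u.subst σ)

def Lit.subst (σ : ℕ → Term) (l : Lit) : Lit := ⟨l.pos, l.atm.subst σ⟩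

def ClauseSubst (σ : ℕ → Term) (c : Clause) : Clause := c.image (Lit.subst σ)

def IsUnifier (σ : ℕ → Term) (a b : Atm) : Prop := a.subst σ = b.subst σ

def IsMGU (σ : ℕ → Term) (a b : Atm) : Prop :=
  IsUnifier σ a b ∧ ∀ τ, IsUnifier τ a b → ∃ δ, ∀ x, (σ x).subst δ = τ x

/-- Resolution derivations from `Ψ`, where every resolvent must satisfy `ok`. -/
inductive Deriv (Ψ : Set Clause) (ok : Clause → Prop) : Clause → Prop
  | hyp {c : Clause} : c ∈ Ψ → Deriv Ψ ok c
  | res {c₁ c₂ : Clause} {a b : Atm} {σ : ℕ → Term} :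
      Deriv Ψ ok c₁ → Deriv Ψ ok c₂ →
      (⟨true, a⟩ : Lit) ∈ c₁ → (⟨false, b⟩ : Lit) ∈ c₂ → IsMGU σ a b →
      ok (ClauseSubst σ (c₁.erase ⟨true, a⟩ ∪ c₂.erase ⟨false, b⟩)) →
      Deriv Ψ ok (ClauseSubst σ (c₁.erase ⟨true, a⟩ ∪ c₂.erase ⟨false, b⟩))
  | factor {c : Clause} {l₁ l₂ : Lit} {σ : ℕ → Term} :
      Deriv Ψ ok c → l₁ ∈ c → l₂ ∈ c → l₁ ≠ l₂ → l₁.pos = l₂.pos →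
      IsMGU σ l₁.atm l₂.atm →
      ok (ClauseSubst σ (c.erase l₂)) →
      Deriv Ψ ok (ClauseSubst σ (c.erase l₂))

/-! ### The translation Φ of an abduction problem -/

def vx : Term := .var 0
def vy : Term := .var 1
def pcl (b : Bool) (A : ℕ) (t : Term) : Lit := ⟨true, .conc (b, A) t⟩
def ncl (b : Bool) (A : ℕ) (t : Term) : Lit := ⟨false, .conc (b, A) t⟩
def prl (r : ℕ) (t u : Term) : Lit := ⟨true, .role r t u⟩
def nrl (r : ℕ) (t u : Term) : Lit := ⟨false, .role r t u⟩

def clausesOf (b : Bool) (ci : CI) : Set Clause :=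
  match ci with
  | (.atom A, .atom B) => {({ncl b A vx, pcl b B vx} : Clause)}
  | (.conj (.atom A₁) (.atom A₂), .atom B) =>
      {({ncl b A₁ vx, ncl b A₂ vx, pcl b B vx} : Clause)}
  | (.ex r (.atom A), .atom B) =>
      {({nrl r vx vy, ncl b A vy, pcl b B vx} : Clause)}
  | (.atom A, .ex r (.atom B)) =>
      {({ncl b A vx, prl r vx (.app (b, (.atom A, .ex r (.atom B))) vx)} : Clause),
       ({ncl b A vx, pcl b B (.app (b, (.atom A, .ex r (.atom B))) vx)} : Clause)}
  | _ => ∅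

/-- The clausal translation `Φ` of the abduction problem `⟨T, Σ, C₁ ⊑ C₂⟩`. -/
def Translation (T : TBox) (C1 C2 : ℕ) : Set Clause :=
  (⋃ ci ∈ T, clausesOf false ci ∪ clausesOf true ci) ∪
  {({pcl false C1 .sk0} : Clause), ({ncl true C2 .sk0} : Clause)}

/-- The presaturation `Φ_p` of a clause set. -/
def presat (Ψ : Set Clause) : Set Clause :=
  Ψ ∪ {c | ∃ (b : Bool) (A B : ℕ),
        c = ({ncl b A vx, pcl b B vx} : Clause) ∧ CEntails Ψ c}

/-! ### Herbrand interpretations -/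

def herb (S : Set GAtm) : FOInterp GTerm where
  c0 := .sk0
  app := .app
  conc := fun P => {t | GAtm.conc P t ∈ S}
  role := fun r => {p | GAtm.role r p.1 p.2 ∈ S}

def HModels (S : Set GAtm) (Ψ : Set Clause) : Prop := CModels (herb S) Ψ

def piPosAtoms (S : Set ℕ) (Ψ : Set Clause) : Set GAtm := {a | InPIpos S Ψ a}

/-- EL semantics of a concept in a Herbrand interpretation (original predicates). -/
def gsem (I : Set GAtm) : ELConcept → Set GTerm
  | .top => Set.univ
  | .atom A => {t | GAtm.conc (false, A) t ∈ I}
  | .conj C D => gsem I C ∩ gsem I D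
  | .ex r C => {t | ∃ u, GAtm.role r t u ∈ I ∧ u ∈ gsem I C}

/-! ### Canonical models of description trees -/

/-- The canonical model `I^c(sl)` of a description tree with Skolem labeling `sl`. -/
def canonModel (t : DescTree) (sl : ℕ → GTerm) : Set GAtm :=
  {a | ∃ e ∈ t.E, a = GAtm.role e.2.1 (sl e.1) (sl e.2.2)} ∪
  {a | ∃ v ∈ t.V, ∃ A ∈ t.label v, a = GAtm.conc (false, A) (sl v)}

/-- The unary-predicate part `I^c_A(sl)` of the canonical model, as labelled pairs. -/
def canonA (t : DescTree) (sl : ℕ → GTerm) : Set (ℕ × GTerm) :=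
  {p | ∃ v ∈ t.V, p.1 ∈ t.label v ∧ p.2 = sl v}

/-- The clause `⋁_{v ∈ V₂, B ∈ l₂(v)} ¬B̄(sl v)`. -/
def negTreeClause (t : DescTree) (sl : ℕ → GTerm) : Clause :=
  t.V.biUnion (fun v =>
    (t.label v).image (fun B => (⟨false, Atm.conc (true, B) (sl v).toTerm⟩ : Lit)))

/-! ### Constructible hypotheses -/

def negClauseOf (B : Finset (ℕ × GTerm)) : Clause :=
  B.image (fun p => (⟨false, Atm.conc (true, p.1) p.2.toTerm⟩ : Lit))

def posUnit (p : ℕ × GTerm) : Clause := {⟨true, Atm.conc (false, p.1) p.2.toTerm⟩}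

/-- `C_{X,t} = ⊓{A | A(t) ∈ X}`. -/
noncomputable def CAt (X : Finset (ℕ × GTerm)) (t : GTerm) : ELConcept :=
  conjOf ((X.filter (fun p => p.2 = t)).image Prod.fst)

/-- `H` is the hypothesis constructed from the sets `A` and `B` of ground atoms. -/
def ConstructibleVia (S : Set ℕ) (Ψ : Set Clause)
    (A B : Finset (ℕ × GTerm)) (H : TBox) : Prop :=
  A.Nonempty ∧ B.Nonempty ∧
  negClauseOf B ∈ PIneg S Ψ ∧
  (∀ p ∈ B, ∃ a, InPIpos S Ψ (GAtm.conc (false, a) p.2)) ∧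
  ((↑A : Set (ℕ × GTerm)) =
    {q | InPIpos S Ψ (GAtm.conc (false, q.1) q.2) ∧ ∃ p ∈ B, p.2 = q.2}) ∧
  ((↑H : Set CI) =
    {ci | ∃ p ∈ B, ci = (CAt A p.2, CAt B p.2) ∧ ¬ PrecSq (CAt B p.2) (CAt A p.2)})

def Constructible (S : Set ℕ) (Ψ : Set Clause) (H : TBox) : Prop :=
  ∃ A B, ConstructibleVia S Ψ A B H

/-! ### Clause shapes I3–I7, signature counts -/

def isI3 (c : Clause) : Prop :=
  ∃ P Q : Bool × ℕ, c = ({⟨false, .conc P vx⟩, ⟨true, .conc Q vx⟩} : Clause)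

def isI4 (c : Clause) : Prop :=
  ∃ P₁ P₂ Q : Bool × ℕ,
    c = ({⟨false, .conc P₁ vx⟩, ⟨false, .conc P₂ vx⟩, ⟨true, .conc Q vx⟩} : Clause)

def isI5 (c : Clause) : Prop :=
  ∃ (r : ℕ) (P Q : Bool × ℕ),
    c = ({⟨false, .role r vx vy⟩, ⟨false, .conc P vy⟩, ⟨true, .conc Q vx⟩} : Clause)

def isI7 (c : Clause) : Prop :=
  ∃ (P Q : Bool × ℕ) (f : SkFun),
    c = ({⟨false, .conc P vx⟩, ⟨true, .conc Q (.app f vx)⟩} : Clause)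

/-- The atomic concept `A_sk` occurring positively in the I7-clause introducing `sk`
(as a predicate, with the copy flag of `sk`). -/
def skHeadPred (f : SkFun) : Bool × ℕ :=
  (f.1, match f.2.2 with
        | .ex _ (.atom B) => B
        | _ => 0)

def Term.funs : Term → Set SkFun
  | .var _ => ∅
  | .sk0 => ∅
  | .app f t => insert f t.funs

def Atm.funs : Atm → Set SkFun
  | .conc _ t => t.funs
  | .role _ t u => t.funs ∪ u.funs

def clauseFuns (c : Clause) : Set SkFun := {f | ∃ l ∈ c, f ∈ l.atm.funs}

def clauseConcs (c : Clause) : Set (Bool × ℕ) := {P | ∃ l ∈ c, ∃ t, l.atm = Atm.conc P t}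

/-- The number of atomic concepts occurring in a clause set. -/
noncomputable def numConcs (Ψ : Set Clause) : ℕ := Set.ncard {P | ∃ c ∈ Ψ, P ∈ clauseConcs c}

/-- The number of occurrences of existential role restrictions in a TBox. -/
def exOccs (T : TBox) : ℕ := T.sum (fun ci => ci.1.exCount + ci.2.exCount)

/-- The number of Skolem functions occurring in `Ψ` introduced for the original copy. -/
noncomputable def numOrigSk (Ψ : Set Clause) : ℕ :=
  Set.ncard {f : SkFun | f.1 = false ∧ ∃ c ∈ Ψ, f ∈ clauseFuns c}

def unitC (P : Bool × ℕ) (t : GTerm) : Clause := {⟨true, .conc P t.toTerm⟩}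
def negUnitC (P : Bool × ℕ) (t : GTerm) : Clause := {⟨false, .conc P t.toTerm⟩}

/-! ### Skolem trees and solution trees -/

structure SkolemTree where
  V : Finset ℕ
  root : ℕ
  E : Finset (ℕ × ℕ)
  s : ℕ → GTerm
  dep : ℕ → ℕ
  root_mem : root ∈ V
  s_root : s root = .sk0
  edge_mem : ∀ e ∈ E, e.1 ∈ V ∧ e.2 ∈ V
  edge_term : ∀ e ∈ E, s e.2 = s e.1 ∨ ∃ f, s e.2 = GTerm.app f (s e.1)
  parent_unique : ∀ e ∈ E, ∀ e' ∈ E, e.2 = e'.2 → e = e'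
  parent_exists : ∀ v ∈ V, v ≠ root → ∃ e ∈ E, e.2 = v
  dep_root : dep root = 0
  dep_edge : ∀ e ∈ E, dep e.2 = dep e.1 + 1

/-- `v` is an ancestor of `w` (every node is an ancestor of itself). -/
def SkolemTree.Ancestor (F : SkolemTree) (v w : ℕ) : Prop :=
  Relation.ReflTransGen (fun a b => (a, b) ∈ F.E) v w

/-- The descendants of `v` (the nodes of the subtree under `v`). -/
def SkolemTree.Desc (F : SkolemTree) (v : ℕ) : Set ℕ := {w | F.Ancestor v w}

/-- The positive labeling `l⁺`. -/
def posLab (Ψ : Set Clause) (F : SkolemTree) (v : ℕ) : Set ℕ :=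
  {A | InPIpos Set.univ Ψ (GAtm.conc (false, A) (F.s v))}

def SkolemTree.children (F : SkolemTree) (v : ℕ) : Finset ℕ :=
  (F.E.filter (fun e => e.1 = v)).image Prod.snd

def SkolemTree.leaves (F : SkolemTree) : Finset ℕ :=
  F.V.filter (fun v => F.E.filter (fun e => e.1 = v) = ∅)

/-- The unit role facts `{r(t, sk(t)) ∈ PI^{g+}}`. -/
def roleFacts (Ψ : Set Clause) : Set Clause :=
  {c | (∃ (r : ℕ) (t : GTerm) (f : SkFun),
        c = ({⟨true, Atm.role r t.toTerm (GTerm.app f t).toTerm⟩} : Clause)) ∧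
       c ∈ PIpos Set.univ Ψ}

def nonGroundOf (Ψ : Set Clause) : Set Clause := {c | c ∈ Ψ ∧ ¬ ClauseGround c}

/-- Negative labeling `l⁻` for a Skolem tree (labels are duplicate concept names,
recorded by their underlying name in `N_C`). -/
def IsNegLabeling (Ψ : Set Clause) (C2 : ℕ) (F : SkolemTree) (ln : ℕ → ℕ) : Prop :=
  ln F.root = C2 ∧
  ∀ v ∈ F.V, F.children v ≠ ∅ →
    Deriv ({negUnitC (true, ln v) (F.s v)} ∪ roleFacts Ψ ∪ nonGroundOf (presat Ψ))
      (fun _ => True)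
      ((F.children v).image
        (fun w => (⟨false, Atm.conc (true, ln w) (F.s w).toTerm⟩ : Lit)))

/-- The clause `φ_{F,l⁻}` determined by the leaves.  (Clauses are finite sets of
literals, so it is automatically considered up to repetition of literals.) -/
def leavesClause (F : SkolemTree) (ln : ℕ → ℕ) : Clause :=
  F.leaves.image (fun v => (⟨false, Atm.conc (true, ln v) (F.s v).toTerm⟩ : Lit))

def IsSolutionTree (Ψ : Set Clause) (C2 : ℕ) (F : SkolemTree) (ln : ℕ → ℕ) : Prop :=
  (∀ v ∈ F.V, (posLab Ψ F v).Nonempty) ∧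
  IsNegLabeling Ψ C2 F ln ∧
  leavesClause F ln ∈ PIneg Set.univ Ψ ∧
  ∃ (A B : Finset (ℕ × GTerm)) (H : TBox),
    ConstructibleVia Set.univ Ψ A B H ∧
    (↑B : Set (ℕ × GTerm)) = {p | ∃ v ∈ F.leaves, p = (ln v, F.s v)}

/-- The solution `{⊓l⁺(v) ⊑ l⁻(v) | v a leaf}` of a solution tree. -/
def treeSol (Ψ : Set Clause) (F : SkolemTree) (ln : ℕ → ℕ) : Set CI :=
  {ci | ∃ v ∈ F.leaves, ∃ s : Finset ℕ, (↑s : Set ℕ) = posLab Ψ F v ∧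
        ci = (conjOf s, ELConcept.atom (ln v))}

/-- Minimality: no solution tree with strictly fewer nodes has a solution
included in the solution of this one. -/
def MinimalSolutionTree (Ψ : Set Clause) (C2 : ℕ) (F : SkolemTree) (ln : ℕ → ℕ) : Prop :=
  IsSolutionTree Ψ C2 F ln ∧
  ∀ (F' : SkolemTree) (ln' : ℕ → ℕ),
    IsSolutionTree Ψ C2 F' ln' →
    treeSol Ψ F' ln' ⊆ treeSol Ψ F ln →
    F.V.card ≤ F'.V.card

/-- Replace the (unique) occurrence of `old` as a suffix of a ground term by `new`. -/
def GTerm.replaceSuffix (old new : GTerm) : GTerm → GTerm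
  | .sk0 => if GTerm.sk0 = old then new else .sk0
  | .app f u => if GTerm.app f u = old then new else .app f (GTerm.replaceSuffix old new u)


/-! ### Auxiliary material for Statement 9 -/

section Aux

/-- Subterms of a ground term. -/
def GTerm.subs : GTerm → Finset GTerm
  | .sk0 => {.sk0}
  | .app f s => insert (.app f s) s.subs

lemma GTerm.mem_subs_self : ∀ t : GTerm, t ∈ t.subs
  | .sk0 => by simp [subs]
  | .app f s => by simp [subs]

lemma GTerm.sk0_mem_subs : ∀ t : GTerm, GTerm.sk0 ∈ t.subs
  | .sk0 => by simp [subs]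
  | .app f s => by simp [subs, sk0_mem_subs s]

lemma GTerm.subs_subset : ∀ t : GTerm, ∀ u ∈ t.subs, u.subs ⊆ t.subs
  | .sk0, u, hu => by
      simp [subs] at hu; subst hu; exact Finset.Subset.refl _
  | .app f s, u, hu => by
      rcases Finset.mem_insert.1 hu with h | h
      · subst h; exact Finset.Subset.refl _
      · exact (subs_subset s u h).trans (Finset.subset_insert _ _)

def GTerm.pred : GTerm → GTerm
  | .sk0 => .sk0
  | .app _ s => s

def GTerm.rOf : GTerm → ℕ
  | .app (_, (_, .ex r _)) _ => r
  | _ => 0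

/-- The minimal Herbrand model of the translation (original-copy atoms only). -/
inductive Min (T : TBox) (C1 : ℕ) : GAtm → Prop
  | base : Min T C1 (.conc (false, C1) .sk0)
  | s1 {A B : ℕ} {t : GTerm} :
      (ELConcept.atom A, ELConcept.atom B) ∈ T →
      Min T C1 (.conc (false, A) t) → Min T C1 (.conc (false, B) t)
  | s2 {A₁ A₂ B : ℕ} {t : GTerm} :
      (ELConcept.conj (.atom A₁) (.atom A₂), ELConcept.atom B) ∈ T →
      Min T C1 (.conc (false, A₁) t) → Min T C1 (.conc (false, A₂) t) →
      Min T C1 (.conc (false, B) t)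
  | s3 {r A B : ℕ} {t u : GTerm} :
      (ELConcept.ex r (.atom A), ELConcept.atom B) ∈ T →
      Min T C1 (.role r t u) → Min T C1 (.conc (false, A) u) →
      Min T C1 (.conc (false, B) t)
  | s4r {A r B : ℕ} {t : GTerm} :
      (ELConcept.atom A, ELConcept.ex r (.atom B)) ∈ T →
      Min T C1 (.conc (false, A) t) →
      Min T C1 (.role r t (.app (false, (.atom A, .ex r (.atom B))) t))
  | s4c {A r B : ℕ} {t : GTerm} :
      (ELConcept.atom A, ELConcept.ex r (.atom B)) ∈ T →
      Min T C1 (.conc (false, A) t) →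
      Min T C1 (.conc (false, B) (.app (false, (.atom A, .ex r (.atom B))) t))

lemma Min.not_true {T : TBox} {C1 : ℕ} {a : GAtm} (h : Min T C1 a) :
    ∀ (A : ℕ) (t : GTerm), a ≠ .conc (true, A) t := by
  cases h <;> simp

/-- Terms reachable in the minimal model. -/
inductive Reach (T : TBox) (C1 : ℕ) : GTerm → Prop
  | sk0 : Reach T C1 .sk0
  | step {A r B : ℕ} {s : GTerm} :
      Reach T C1 s →
      (ELConcept.atom A, ELConcept.ex r (.atom B)) ∈ T →
      Min T C1 (.conc (false, A) s) →
      Reach T C1 (.app (false, (.atom A, .ex r (.atom B))) s)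

lemma min_reach {T : TBox} {C1 : ℕ} {a : GAtm} (h : Min T C1 a) :
    (∀ (A : ℕ) (t : GTerm), a = .conc (false, A) t → Reach T C1 t) ∧
    (∀ (r : ℕ) (t u : GTerm), a = .role r t u → Reach T C1 t) := by
  induction h with
  | base => exact ⟨fun A t ht => by cases ht; exact Reach.sk0, by simp⟩
  | s1 hm h ih => exact ⟨fun A t ht => by cases ht; exact ih.1 _ _ rfl, by simp⟩
  | s2 hm h1 h2 ih1 ih2 =>
      exact ⟨fun A t ht => by cases ht; exact ih1.1 _ _ rfl, by simp⟩
  | s3 hm hr hc ihr ihc =>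
      exact ⟨fun A t ht => by cases ht; exact ihr.2 _ _ _ rfl, by simp⟩
  | s4r hm h ih =>
      exact ⟨by simp, fun r t u ht => by cases ht; exact ih.1 _ _ rfl⟩
  | s4c hm h ih =>
      exact ⟨fun A t ht => by cases ht; exact Reach.step (ih.1 _ _ rfl) hm ‹_›, by simp⟩

lemma reach_inv {T : TBox} {C1 : ℕ} {f : SkFun} {s : GTerm}
    (h : Reach T C1 (.app f s)) :
    ∃ A r B, f = (false, (ELConcept.atom A, ELConcept.ex r (.atom B))) ∧
      (ELConcept.atom A, ELConcept.ex r (.atom B)) ∈ T ∧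
      Min T C1 (.conc (false, A) s) ∧ Reach T C1 s := by
  cases h with
  | step hs hm hmin => exact ⟨_, _, _, rfl, hm, hmin, hs⟩

lemma reach_of_mem_subs {T : TBox} {C1 : ℕ} :
    ∀ {t : GTerm}, Reach T C1 t → ∀ u ∈ t.subs, Reach T C1 u := by
  intro t
  induction t with
  | sk0 => intro h u hu; simp [GTerm.subs] at hu; subst hu; exact h
  | app f s ih =>
      intro h u hu
      rcases Finset.mem_insert.1 hu with h' | h'
      · subst h'; exact h
      · obtain ⟨A, r, B, hf, hm, hmin, hs⟩ := reach_inv h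
        exact ih hs u h'

open Classical in
/-- Interpretation of ground terms in an EL interpretation. -/
noncomputable def gval {α : Type} (I : Interp α) (d : α) : GTerm → α
  | .sk0 => d
  | .app (_, (_, .ex r D)) s =>
      if h : ∃ e, (gval I d s, e) ∈ I.role r ∧ e ∈ D.sem I then h.choose
      else gval I d s
  | .app _ s => gval I d s

lemma min_sound {T : TBox} {C1 : ℕ} {α : Type} {I : Interp α} (hM : Models I T)
    {d : α} (hd : d ∈ I.conc C1) {a : GAtm} (h : Min T C1 a) :
    (∀ (A : ℕ) (t : GTerm), a = .conc (false, A) t → gval I d t ∈ I.conc A) ∧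
    (∀ (r : ℕ) (t u : GTerm), a = .role r t u →
      (gval I d t, gval I d u) ∈ I.role r) := by
  induction h with
  | base =>
      exact ⟨fun A t ht => by cases ht; exact hd, by simp⟩
  | @s1 A B t hm h ih =>
      refine ⟨fun A' t' ht => ?_, by simp⟩
      cases ht
      exact hM _ hm (ih.1 _ _ rfl)
  | @s2 A₁ A₂ B t hm h1 h2 ih1 ih2 =>
      refine ⟨fun A' t' ht => ?_, by simp⟩
      cases ht
      exact hM _ hm ⟨ih1.1 _ _ rfl, ih2.1 _ _ rfl⟩
  | @s3 r A B t u hm hr hc ihr ihc =>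
      refine ⟨fun A' t' ht => ?_, by simp⟩
      cases ht
      exact hM _ hm ⟨gval I d u, ihr.2 _ _ _ rfl, ihc.1 _ _ rfl⟩
  | @s4r A r B t hm h ih =>
      refine ⟨by simp, fun r' t' u' ht => ?_⟩
      cases ht
      have hx : gval I d t ∈ I.conc A := ih.1 _ _ rfl
      have hex : ∃ e, (gval I d t, e) ∈ I.role r ∧ e ∈ (ELConcept.atom B).sem I :=
        hM _ hm hx
      have heq : gval I d (.app (false, (.atom A, .ex r (.atom B))) t)
          = hex.choose := by
        rw [gval, dif_pos hex]
      rw [heq]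
      exact hex.choose_spec.1
  | @s4c A r B t hm h ih =>
      refine ⟨fun A' t' ht => ?_, by simp⟩
      cases ht
      have hx : gval I d t ∈ I.conc A := ih.1 _ _ rfl
      have hex : ∃ e, (gval I d t, e) ∈ I.role r ∧ e ∈ (ELConcept.atom B).sem I :=
        hM _ hm hx
      have heq : gval I d (.app (false, (.atom A, .ex r (.atom B))) t)
          = hex.choose := by
        rw [gval, dif_pos hex]
      rw [heq]
      exact hex.choose_spec.2

lemma eval_toTerm {S : Set GAtm} (ρ : ℕ → GTerm) :
    ∀ t : GTerm, Term.eval (herb S) ρ t.toTerm = t := by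
  intro t
  induction t with
  | sk0 => rfl
  | app f s ih => simp only [GTerm.toTerm, Term.eval, ih]; rfl

lemma foldr_conj_sem {α : Type} (I : Interp α) (L : List ELConcept) (x : α) :
    x ∈ (L.foldr ELConcept.conj ELConcept.top).sem I ↔ ∀ C ∈ L, x ∈ C.sem I := by
  induction L with
  | nil => simp [ELConcept.sem]
  | cons C L ih => simp [ELConcept.sem, Set.mem_inter_iff, ih]

lemma conjOf_sem {α : Type} (I : Interp α) (s : Finset ℕ) (x : α) :
    x ∈ (conjOf s).sem I ↔ ∀ A ∈ s, x ∈ I.conc A := by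
  rw [conjOf, foldr_conj_sem]
  constructor
  · intro h A hA
    exact h (ELConcept.atom A) (List.mem_map.2 ⟨A, (Finset.mem_toList).2 hA, rfl⟩)
  · intro h C hC
    obtain ⟨A, hA, rfl⟩ := List.mem_map.1 hC
    exact h A ((Finset.mem_toList).1 hA)

/-- The minimal model satisfies the translation. -/
lemma herb_min_models (T : TBox) (C1 C2 : ℕ) (hNF : NormalForm T) :
    CModels (herb {a | Min T C1 a}) (Translation T C1 C2) := by
  intro c hc
  rcases hc with hc | hc
  · -- TBox clauses
    simp only [Set.mem_iUnion] at hc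
    obtain ⟨ci, hciT, hc⟩ := hc
    have hnf := hNF ci hciT
    rcases hnf with ⟨A, B, rfl⟩ | ⟨A₁, A₂, B, rfl⟩ | ⟨r, A, B, rfl⟩ | ⟨A, r, B, rfl⟩
    all_goals (
      rcases hc with hc | hc)
    -- shape 1, false copy
    · simp only [clausesOf, Set.mem_singleton_iff] at hc
      subst hc
      intro ρ
      by_cases h : Min T C1 (.conc (false, A) (ρ 0))
      · exact ⟨pcl false B vx, by simp [pcl, ncl],
          by simp [Lit.sat, Atm.sat, herb, Term.eval, vx, pcl]; exact Min.s1 hciT h⟩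
      · exact ⟨ncl false A vx, by simp [pcl, ncl],
          by simp [Lit.sat, Atm.sat, herb, Term.eval, vx, ncl]; exact h⟩
    -- shape 1, true copy
    · simp only [clausesOf, Set.mem_singleton_iff] at hc
      subst hc
      intro ρ
      refine ⟨ncl true A vx, by simp [pcl, ncl], ?_⟩
      simp [Lit.sat, Atm.sat, herb, Term.eval, vx, ncl]
      intro h
      exact (h.not_true A (ρ 0)) rfl
    -- shape 2, false copy
    · simp only [clausesOf, Set.mem_singleton_iff] at hc
      subst hc
      intro ρ
      by_cases h1 : Min T C1 (.conc (false, A₁) (ρ 0))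
      · by_cases h2 : Min T C1 (.conc (false, A₂) (ρ 0))
        · exact ⟨pcl false B vx, by simp [pcl, ncl],
            by simp [Lit.sat, Atm.sat, herb, Term.eval, vx, pcl];
               exact Min.s2 hciT h1 h2⟩
        · exact ⟨ncl false A₂ vx, by simp [pcl, ncl],
            by simp [Lit.sat, Atm.sat, herb, Term.eval, vx, ncl]; exact h2⟩
      · exact ⟨ncl false A₁ vx, by simp [pcl, ncl],
          by simp [Lit.sat, Atm.sat, herb, Term.eval, vx, ncl]; exact h1⟩
    -- shape 2, true copy
    · simp only [clausesOf, Set.mem_singleton_iff] at hc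
      subst hc
      intro ρ
      refine ⟨ncl true A₁ vx, by simp [pcl, ncl], ?_⟩
      simp [Lit.sat, Atm.sat, herb, Term.eval, vx, ncl]
      intro h
      exact (h.not_true A₁ (ρ 0)) rfl
    -- shape 3, false copy
    · simp only [clausesOf, Set.mem_singleton_iff] at hc
      subst hc
      intro ρ
      by_cases hr : Min T C1 (.role r (ρ 0) (ρ 1))
      · by_cases h1 : Min T C1 (.conc (false, A) (ρ 1))
        · exact ⟨pcl false B vx, by simp [pcl, ncl, nrl],
            by simp [Lit.sat, Atm.sat, herb, Term.eval, vx, pcl];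
               exact Min.s3 hciT hr h1⟩
        · exact ⟨ncl false A vy, by simp [pcl, ncl, nrl],
            by simp [Lit.sat, Atm.sat, herb, Term.eval, vy, ncl]; exact h1⟩
      · exact ⟨nrl r vx vy, by simp [pcl, ncl, nrl],
          by simp [Lit.sat, Atm.sat, herb, Term.eval, vx, vy, nrl]; exact hr⟩
    -- shape 3, true copy
    · simp only [clausesOf, Set.mem_singleton_iff] at hc
      subst hc
      intro ρ
      refine ⟨ncl true A vy, by simp [pcl, ncl, nrl], ?_⟩
      simp [Lit.sat, Atm.sat, herb, Term.eval, vy, ncl]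
      intro h
      exact (h.not_true A (ρ 1)) rfl
    -- shape 4, false copy
    · simp only [clausesOf, Set.mem_insert_iff, Set.mem_singleton_iff] at hc
      rcases hc with hc | hc
      · subst hc
        intro ρ
        by_cases h : Min T C1 (.conc (false, A) (ρ 0))
        · refine ⟨prl r vx (.app (false, (.atom A, .ex r (.atom B))) vx),
            by simp [prl, ncl], ?_⟩
          simp only [Lit.sat, Atm.sat, herb, Term.eval, vx, prl, if_true]
          exact Min.s4r hciT h
        · exact ⟨ncl false A vx, by simp [prl, ncl],
            by simp [Lit.sat, Atm.sat, herb, Term.eval, vx, ncl]; exact h⟩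
      · subst hc
        intro ρ
        by_cases h : Min T C1 (.conc (false, A) (ρ 0))
        · refine ⟨pcl false B (.app (false, (.atom A, .ex r (.atom B))) vx),
            by simp [pcl, ncl], ?_⟩
          simp only [Lit.sat, Atm.sat, herb, Term.eval, vx, pcl, if_true]
          exact Min.s4c hciT h
        · exact ⟨ncl false A vx, by simp [pcl, ncl],
            by simp [Lit.sat, Atm.sat, herb, Term.eval, vx, ncl]; exact h⟩
    -- shape 4, true copy
    · simp only [clausesOf, Set.mem_insert_iff, Set.mem_singleton_iff] at hc
      rcases hc with hc | hc
      all_goals subst hc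
      all_goals intro ρ
      all_goals refine ⟨ncl true A vx, by simp [pcl, ncl, prl], ?_⟩
      all_goals (
        simp [Lit.sat, Atm.sat, herb, Term.eval, vx, ncl]
        intro h
        exact (h.not_true A (ρ 0)) rfl)
  · -- the two units
    rcases hc with hc | hc
    · subst hc
      intro ρ
      exact ⟨pcl false C1 .sk0, by simp,
        by simp [Lit.sat, Atm.sat, herb, Term.eval, pcl]; exact Min.base⟩
    · rw [Set.mem_singleton_iff] at hc
      subst hc
      intro ρ
      refine ⟨ncl true C2 .sk0, by simp, ?_⟩
      simp [Lit.sat, Atm.sat, herb, Term.eval, ncl]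
      intro h
      exact (h.not_true C2 .sk0) rfl

/-! ### The description tree built from a finite set of labelled ground terms -/

noncomputable def Sset (A : Finset (ℕ × GTerm)) : Finset GTerm :=
  A.biUnion (fun p => p.2.subs)

noncomputable def tlist (A : Finset (ℕ × GTerm)) : List GTerm := (Sset A).toList

noncomputable def slf (A : Finset (ℕ × GTerm)) (v : ℕ) : GTerm :=
  (tlist A).getD v .sk0

noncomputable def idxf (A : Finset (ℕ × GTerm)) (t : GTerm) : ℕ :=
  (tlist A).idxOf t

lemma mem_tlist {A : Finset (ℕ × GTerm)} {t : GTerm} :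
    t ∈ tlist A ↔ t ∈ Sset A := Finset.mem_toList

lemma idx_lt {A : Finset (ℕ × GTerm)} {t : GTerm} (ht : t ∈ Sset A) :
    idxf A t < (tlist A).length :=
  List.idxOf_lt_length_iff.2 (mem_tlist.2 ht)

lemma sl_idx {A : Finset (ℕ × GTerm)} {t : GTerm} (ht : t ∈ Sset A) :
    slf A (idxf A t) = t := by
  rw [slf, List.getD_eq_getElem _ _ (idx_lt ht)]
  exact List.getElem_idxOf (idx_lt ht)

lemma sl_mem {A : Finset (ℕ × GTerm)} {v : ℕ} (hv : v < (tlist A).length) :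
    slf A v ∈ Sset A := by
  rw [slf, List.getD_eq_getElem _ _ hv]
  exact mem_tlist.1 (List.getElem_mem hv)

lemma idx_sl {A : Finset (ℕ × GTerm)} {v : ℕ} (hv : v < (tlist A).length) :
    idxf A (slf A v) = v := by
  rw [slf, List.getD_eq_getElem _ _ hv]
  exact List.Nodup.idxOf_getElem (Finset.nodup_toList _) _ _

lemma Sset_pred_closed {A : Finset (ℕ × GTerm)} {f : SkFun} {s : GTerm}
    (h : GTerm.app f s ∈ Sset A) : s ∈ Sset A := by
  obtain ⟨p, hp, hsub⟩ := Finset.mem_biUnion.1 h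
  exact Finset.mem_biUnion.2 ⟨p, hp,
    GTerm.subs_subset _ _ hsub (Finset.mem_insert.2 (Or.inr (GTerm.mem_subs_self s)))⟩

lemma sk0_mem_Sset {A : Finset (ℕ × GTerm)} (hA : A.Nonempty) :
    GTerm.sk0 ∈ Sset A := by
  obtain ⟨p, hp⟩ := hA
  exact Finset.mem_biUnion.2 ⟨p, hp, GTerm.sk0_mem_subs _⟩

lemma not_sk0_app {u : GTerm} (hu : u ≠ .sk0) : ∃ f s, u = .app f s := by
  cases u with
  | sk0 => exact absurd rfl hu
  | app f s => exact ⟨f, s, rfl⟩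

noncomputable def treeOf (A : Finset (ℕ × GTerm)) (hA : A.Nonempty) : DescTree where
  V := Finset.range (tlist A).length
  root := idxf A .sk0
  E := ((Sset A).erase .sk0).image
    (fun t => (idxf A t.pred, t.rOf, idxf A t))
  label := fun v => (A.filter (fun p => p.2 = slf A v)).image Prod.fst
  dep := fun v => (slf A v).depth
  root_mem := Finset.mem_range.2 (idx_lt (sk0_mem_Sset hA))
  edge_mem := by
    intro e he
    obtain ⟨t, ht, rfl⟩ := Finset.mem_image.1 he
    obtain ⟨hne, htS⟩ := Finset.mem_erase.1 ht
    obtain ⟨f, s, rfl⟩ := not_sk0_app hne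
    refine ⟨Finset.mem_range.2 (idx_lt ?_), Finset.mem_range.2 (idx_lt htS)⟩
    exact Sset_pred_closed htS
  parent_unique := by
    intro e he e' he' h
    obtain ⟨t, ht, rfl⟩ := Finset.mem_image.1 he
    obtain ⟨u, hu, rfl⟩ := Finset.mem_image.1 he'
    obtain ⟨-, htS⟩ := Finset.mem_erase.1 ht
    obtain ⟨-, huS⟩ := Finset.mem_erase.1 hu
    have : t = u := by
      have h1 := sl_idx htS
      have h2 := sl_idx huS
      simp only at h
      rw [← h1, ← h2, h]
    subst this
    rfl
  parent_exists := by
    intro v hv hne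
    have hv' := Finset.mem_range.1 hv
    have htS : slf A v ∈ Sset A := sl_mem hv'
    have hne' : slf A v ≠ .sk0 := by
      intro h
      apply hne
      rw [← idx_sl hv', h]
    refine ⟨(idxf A (slf A v).pred, (slf A v).rOf, idxf A (slf A v)),
      Finset.mem_image.2 ⟨slf A v, Finset.mem_erase.2 ⟨hne', htS⟩, rfl⟩, ?_⟩
    exact idx_sl hv'
  dep_root := by
    show (slf A (idxf A GTerm.sk0)).depth = 0
    rw [sl_idx (sk0_mem_Sset hA)]; rfl
  dep_edge := by
    intro e he
    obtain ⟨t, ht, rfl⟩ := Finset.mem_image.1 he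
    obtain ⟨hne, htS⟩ := Finset.mem_erase.1 ht
    obtain ⟨f, s, rfl⟩ := not_sk0_app hne
    have hsS : s ∈ Sset A := Sset_pred_closed htS
    simp only
    rw [sl_idx htS]
    show (GTerm.app f s).depth = (slf A (idxf A (GTerm.pred (GTerm.app f s)))).depth + 1
    rw [GTerm.pred, sl_idx hsS]
    rfl

end Aux

/-- construction of subsumers of `C₁` from positive prime implicates. -/
theorem subsumer_construction_from_pipos
    (T : TBox) (C1 C2 : ℕ) (hNF : NormalForm T)
    (hno : ¬ Entails T (.atom C1) (.atom C2))
    (A : Finset (ℕ × GTerm)) (hA : A.Nonempty)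
    (hmem : ∀ p ∈ A,
      InPIpos Set.univ (Translation T C1 C2) (GAtm.conc (false, p.1) p.2)) :
    ∃ (t : DescTree) (sl : ℕ → GTerm),
      (↑A : Set (ℕ × GTerm)) = canonA t sl ∧ Entails T (.atom C1) t.concept := by
  classical
  have hMinA : ∀ p ∈ A, Min T C1 (GAtm.conc (false, p.1) p.2) := by
    intro p hp
    have hce : CEntails (Translation T C1 C2)
        ({⟨true, (GAtm.conc (false, p.1) p.2).toAtm⟩} : Clause) := (hmem p hp).1.1
    obtain ⟨l, hl, hs⟩ :=
      hce GTerm (herb {a | Min T C1 a}) (herb_min_models T C1 C2 hNF)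
        (fun _ => GTerm.sk0)
    rw [Finset.mem_singleton] at hl
    subst hl
    rw [Lit.sat] at hs
    simp only [if_true] at hs
    rw [GAtm.toAtm, Atm.sat, eval_toTerm] at hs
    exact hs
  have hReach : ∀ t ∈ Sset A, Reach T C1 t := by
    intro t ht
    obtain ⟨p, hp, hsub⟩ := Finset.mem_biUnion.1 ht
    exact reach_of_mem_subs ((min_reach (hMinA p hp)).1 _ _ rfl) t hsub
  refine ⟨treeOf A hA, slf A, ?_, ?_⟩
  · -- A = canonA
    ext p
    simp only [Finset.mem_coe, canonA, Set.mem_setOf_eq]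
    constructor
    · intro hp
      have hpS : p.2 ∈ Sset A := Finset.mem_biUnion.2 ⟨p, hp, GTerm.mem_subs_self _⟩
      refine ⟨idxf A p.2, ?_, ?_, (sl_idx hpS).symm⟩
      · show idxf A p.2 ∈ Finset.range (tlist A).length
        exact Finset.mem_range.2 (idx_lt hpS)
      · show p.1 ∈ (A.filter (fun q => q.2 = slf A (idxf A p.2))).image Prod.fst
        exact Finset.mem_image.2 ⟨p, Finset.mem_filter.2 ⟨hp, (sl_idx hpS).symm⟩, rfl⟩
    · rintro ⟨v, hv, hlab, hp2⟩
      have hlab' : p.1 ∈ (A.filter (fun q => q.2 = slf A v)).image Prod.fst := hlab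
      obtain ⟨q, hq, hq1⟩ := Finset.mem_image.1 hlab'
      obtain ⟨hqA, hq2⟩ := Finset.mem_filter.1 hq
      have : q = p := Prod.ext hq1 (by rw [hq2, ← hp2])
      rwa [← this]
  · -- entailment
    intro α I hI x hx
    have hx' : x ∈ I.conc C1 := hx
    have key : ∀ n, ∀ v, v < (tlist A).length →
        gval I x (slf A v) ∈ (ELConcept.sem I ((treeOf A hA).conceptAt n v)) := by
      intro n
      induction n with
      | zero =>
          intro v hv
          show gval I x (slf A v) ∈ (conjOf ((treeOf A hA).label v)).sem I
          rw [conjOf_sem]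
          intro B hB
          obtain ⟨q, hq, rfl⟩ := Finset.mem_image.1 hB
          obtain ⟨hqA, hq2⟩ := Finset.mem_filter.1 hq
          have := (min_sound hI hx' (hMinA q hqA)).1 _ _ rfl
          rwa [hq2] at this
      | succ n ih =>
          intro v hv
          show gval I x (slf A v) ∈
            ((((treeOf A hA).label v).toList.map ELConcept.atom ++
              ((treeOf A hA).E.filter (fun e => e.1 = v)).toList.map
                (fun e => ELConcept.ex e.2.1 ((treeOf A hA).conceptAt n e.2.2))).foldr
                  ELConcept.conj ELConcept.top).sem I
          rw [foldr_conj_sem]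
          intro C hC
          rcases List.mem_append.1 hC with hC | hC
          · obtain ⟨B, hB, rfl⟩ := List.mem_map.1 hC
            have hB' : B ∈ (treeOf A hA).label v := Finset.mem_toList.1 hB
            obtain ⟨q, hq, rfl⟩ := Finset.mem_image.1 hB'
            obtain ⟨hqA, hq2⟩ := Finset.mem_filter.1 hq
            have := (min_sound hI hx' (hMinA q hqA)).1 _ _ rfl
            rw [hq2] at this
            exact this
          · obtain ⟨e, he, rfl⟩ := List.mem_map.1 hC
            have he' : e ∈ (treeOf A hA).E.filter (fun e => e.1 = v) :=
              Finset.mem_toList.1 he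
            obtain ⟨heE, he1⟩ := Finset.mem_filter.1 he'
            obtain ⟨t, ht, rfl⟩ := Finset.mem_image.1 heE
            obtain ⟨hne, htS⟩ := Finset.mem_erase.1 ht
            obtain ⟨f, s, rfl⟩ := not_sk0_app hne
            have hsS : s ∈ Sset A := Sset_pred_closed htS
            obtain ⟨A', r, B', hf, hmT, hminA', -⟩ := reach_inv (hReach _ htS)
            subst hf
            have hrole : Min T C1
                (.role r s (.app (false, (.atom A', .ex r (.atom B'))) s)) :=
              Min.s4r hmT hminA'
            have hsem := (min_sound hI hx' hrole).2 _ _ _ rfl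
            have hsv : slf A v = s := by
              have h1 : idxf A s = v := he1
              rw [← h1, sl_idx hsS]
            refine ⟨gval I x
              (slf A (idxf A (GTerm.app (false, (.atom A', .ex r (.atom B'))) s))),
              ?_, ?_⟩
            · rw [sl_idx htS, hsv]
              exact hsem
            · exact ih _ (idx_lt htS)
    have hroot := key ((treeOf A hA).V.card) (idxf A .sk0) (idx_lt (sk0_mem_Sset hA))
    rw [sl_idx (sk0_mem_Sset hA)] at hroot
    exact hroot

end ELAbd
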